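/- Let 𝒦 ⊂ ℝ³ be an open cone (closed under positive scalar multiplication), let d be a unit vector and c > 0 a constant such that d·θ ≤ −c for every unit vector θ ∈ 𝒦, and let α ∈ (0,1), τ > 0. Then ∫_𝒦 |x|^α e^{τ d·x} dx ≤ τ^{−(3+α)} ∫_𝒦 |y|^α e^{d·y} dy, and the right-hand side is bounded by 2π Γ(3+α)/c^{3+α}; in particular both integrals are finite. -/

import Mathlib

open MeasureTheory Filter Set
open scoped Pointwise

noncomputable section

local notation "E3" => EuclideanSpace ℝ (Fin 3)

lemma aux_cont {c α : ℝ} (hα0 : 0 < α) :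
    Continuous (fun x : E3 => ‖x‖ ^ α * Real.exp (-(c * ‖x‖))) :=
  (continuous_norm.rpow_const fun _ => Or.inr hα0.le).mul
    (Real.continuous_exp.comp ((continuous_const.mul continuous_norm).neg))

lemma aux_g_integrable {c α : ℝ} (hc : 0 < c) (hα0 : 0 < α) (hα1 : α < 1) :
    Integrable (fun x : E3 => ‖x‖ ^ α * Real.exp (-(c * ‖x‖))) := by
  set m : ℝ := max 1 (5 / c) with hm
  have hm1 : (1:ℝ) ≤ m := le_max_left _ _
  have hm2 : 5 / c ≤ m := le_max_right _ _
  have hmc : (1:ℝ) ≤ m * c / 5 := by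
    rw [div_le_iff₀ hc] at hm2
    rw [le_div_iff₀ (by norm_num : (0:ℝ) < 5)]
    nlinarith
  have key : ∀ x : E3, ‖x‖ ^ α * Real.exp (-(c * ‖x‖)) ≤ m ^ 5 * (1 + ‖x‖) ^ (-(4:ℝ)) := by
    intro x
    set t := ‖x‖ with htdef
    have ht : 0 ≤ t := norm_nonneg x
    have h1t : (0:ℝ) < 1 + t := by linarith
    have hta : t ^ α ≤ 1 + t := by
      rcases le_total t 1 with h | h
      · calc t ^ α ≤ 1 := Real.rpow_le_one ht h hα0.le
          _ ≤ 1 + t := by linarith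
      · calc t ^ α ≤ t ^ (1:ℝ) := Real.rpow_le_rpow_of_exponent_le h hα1.le
          _ = t := Real.rpow_one t
          _ ≤ 1 + t := by linarith
    have hexp : (1 + t) ≤ m * Real.exp (c * t / 5) := by
      have h1 : 1 + t ≤ m * (c * t / 5 + 1) := by nlinarith
      have h2 : c * t / 5 + 1 ≤ Real.exp (c * t / 5) := Real.add_one_le_exp _
      nlinarith
    have h5 : (1 + t) ^ 5 ≤ m ^ 5 * Real.exp (c * t) := by
      calc (1 + t) ^ 5 ≤ (m * Real.exp (c * t / 5)) ^ 5 := pow_le_pow_left₀ h1t.le hexp 5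
        _ = m ^ 5 * Real.exp (c * t / 5) ^ 5 := by ring
        _ = m ^ 5 * Real.exp (c * t) := by
            rw [← Real.exp_nat_mul]
            congr 1
            ring
    have hr4 : (1 + t) ^ (-(4:ℝ)) = ((1 + t) ^ (4:ℕ))⁻¹ := by
      rw [Real.rpow_neg h1t.le, show ((4:ℝ)) = ((4:ℕ):ℝ) by norm_num, Real.rpow_natCast]
    rw [hr4, show m ^ 5 * ((1 + t) ^ (4:ℕ))⁻¹ = m ^ 5 / (1 + t) ^ (4:ℕ) by ring,
      le_div_iff₀ (by positivity)]
    have hfin : t ^ α * Real.exp (-(c * t)) * (1 + t) ^ (4:ℕ)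
        ≤ (1 + t) ^ 5 * Real.exp (-(c * t)) := by
      have := Real.exp_pos (-(c * t))
      have h4 : (0:ℝ) ≤ (1 + t) ^ (4:ℕ) := by positivity
      nlinarith [mul_le_mul_of_nonneg_right hta h4]
    refine hfin.trans ?_
    calc (1 + t) ^ 5 * Real.exp (-(c * t))
        ≤ m ^ 5 * Real.exp (c * t) * Real.exp (-(c * t)) := by
          nlinarith [Real.exp_pos (-(c * t))]
      _ = m ^ 5 := by rw [mul_assoc, ← Real.exp_add]; simp
  have hint : Integrable (fun x : E3 => m ^ 5 * (1 + ‖x‖) ^ (-(4:ℝ))) := by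
    refine Integrable.const_mul ?_ _
    exact integrable_one_add_norm (by rw [finrank_euclideanSpace_fin]; norm_num)
  refine hint.mono' (aux_cont hα0).aestronglyMeasurable ?_
  refine ae_of_all _ fun x => ?_
  rw [Real.norm_eq_abs, abs_of_nonneg (by positivity)]
  exact key x

lemma aux_ball_vol : (volume (Metric.ball (0:E3) 1)).toReal = 4 / 3 * Real.pi := by
  rw [EuclideanSpace.volume_ball]
  have hG : Real.Gamma ((Fintype.card (Fin 3) : ℝ) / 2 + 1) = 3 / 4 * Real.sqrt Real.pi := by
    rw [show ((Fintype.card (Fin 3) : ℝ)) = 3 by simp, Real.Gamma_add_one (by norm_num),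
      show (3:ℝ) / 2 = 1 / 2 + 1 by norm_num, Real.Gamma_add_one (by norm_num),
      Real.Gamma_one_half_eq]
    ring
  rw [hG]
  have hsπ : Real.sqrt Real.pi > 0 := Real.sqrt_pos.2 Real.pi_pos
  have h3 : Real.sqrt Real.pi ^ Fintype.card (Fin 3) / (3 / 4 * Real.sqrt Real.pi)
      = 4 / 3 * Real.pi := by
    rw [show Fintype.card (Fin 3) = 3 by simp]
    rw [show Real.sqrt Real.pi ^ 3 = Real.pi * Real.sqrt Real.pi by
      nlinarith [Real.sq_sqrt Real.pi_pos.le]]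
    field_simp
  rw [h3]
  simp [ENNReal.toReal_ofReal (by positivity : (0:ℝ) ≤ 4 / 3 * Real.pi)]

lemma aux_g_integral {c α : ℝ} (hc : 0 < c) (hα0 : 0 < α) :
    ∫ x : E3, ‖x‖ ^ α * Real.exp (-(c * ‖x‖))
      = 4 * Real.pi * Real.Gamma (3 + α) / c ^ (3 + α) := by
  have h := integral_fun_norm_addHaar (volume : Measure E3)
    (fun r : ℝ => r ^ α * Real.exp (-(c * r)))
  simp only [finrank_euclideanSpace_fin] at h
  rw [h, measureReal_def, aux_ball_vol]
  have hI : (∫ y in Ioi (0:ℝ), y ^ (3 - 1 : ℕ) • (y ^ α * Real.exp (-(c * y))))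
      = (1 / c) ^ (3 + α) * Real.Gamma (3 + α) := by
    rw [← Real.integral_rpow_mul_exp_neg_mul_Ioi (by linarith : (0:ℝ) < 3 + α) hc]
    refine setIntegral_congr_fun measurableSet_Ioi fun y hy => ?_
    simp only [smul_eq_mul]
    rw [show (3:ℝ) + α - 1 = 2 + α by ring, Real.rpow_add hy, Real.rpow_two]
    norm_num
    ring
  rw [hI]
  have hcpos : (0:ℝ) < c ^ (3 + α) := Real.rpow_pos_of_pos hc _
  rw [show ((1:ℝ) / c) ^ (3 + α) = (c ^ (3 + α))⁻¹ by
    rw [one_div, Real.inv_rpow hc.le]]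
  rw [nsmul_eq_mul, smul_eq_mul]
  field_simp
  ring

lemma aux_halfspace {c α : ℝ} (hc : 0 < c) (hα0 : 0 < α) (hα1 : α < 1)
    (d : E3) (hd0 : d ≠ 0) :
    ∫ y in {y : E3 | (inner ℝ d y : ℝ) ≤ 0}, ‖y‖ ^ α * Real.exp (-(c * ‖y‖))
      = 2 * Real.pi * Real.Gamma (3 + α) / c ^ (3 + α) := by
  have hcont : Continuous fun y : E3 => (inner ℝ d y : ℝ) :=
    Continuous.inner continuous_const continuous_id
  have hHmeas : MeasurableSet {y : E3 | (inner ℝ d y : ℝ) ≤ 0} :=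
    (isClosed_le hcont continuous_const).measurableSet
  have hgint := aux_g_integrable hc hα0 hα1
  have hnull : volume {y : E3 | (inner ℝ d y : ℝ) = 0} = 0 := by
    have hker : {y : E3 | (inner ℝ d y : ℝ) = 0}
        = (LinearMap.ker (innerSL ℝ d).toLinearMap : Set E3) := by
      ext y
      simp [LinearMap.mem_ker]
    rw [hker]
    apply Measure.addHaar_submodule
    intro htop
    have hdmem : d ∈ LinearMap.ker (innerSL ℝ d).toLinearMap := htop ▸ Submodule.mem_top
    have h0 : (inner ℝ d d : ℝ) = 0 := hdmem
    exact hd0 (inner_self_eq_zero.mp h0)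
  have hneg : (∫ y in {y : E3 | (0:ℝ) < inner ℝ d y}, ‖y‖ ^ α * Real.exp (-(c * ‖y‖)))
      = ∫ y in {y : E3 | (inner ℝ d y : ℝ) < 0}, ‖y‖ ^ α * Real.exp (-(c * ‖y‖)) := by
    have hmp : MeasurePreserving (fun y : E3 => -y) volume volume :=
      Measure.measurePreserving_neg _
    have hemb : MeasurableEmbedding (fun y : E3 => -y) :=
      (Homeomorph.neg E3).measurableEmbedding
    rw [← hmp.setIntegral_preimage_emb hemb
      (fun y => ‖y‖ ^ α * Real.exp (-(c * ‖y‖))) {y : E3 | (0:ℝ) < inner ℝ d y}]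
    have hset : (fun y : E3 => -y) ⁻¹' {y : E3 | (0:ℝ) < inner ℝ d y}
        = {y : E3 | (inner ℝ d y : ℝ) < 0} := by
      ext y
      simp [inner_neg_right]
    rw [hset]
    simp only [norm_neg]
  have haeeq : ({y : E3 | (inner ℝ d y : ℝ) < 0} : Set E3)
      =ᵐ[volume] {y : E3 | (inner ℝ d y : ℝ) ≤ 0} := by
    refine (ae_eq_set).2 ⟨?_, ?_⟩
    · rw [show ({y : E3 | (inner ℝ d y : ℝ) < 0} \ {y : E3 | (inner ℝ d y : ℝ) ≤ 0}) = ∅ by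
        ext y; simp; intro h; exact le_of_lt h]
      simp
    · refine measure_mono_null (fun y hy => ?_) hnull
      exact le_antisymm hy.1 (not_lt.1 hy.2)
  have hsub : (∫ y in {y : E3 | (inner ℝ d y : ℝ) < 0}, ‖y‖ ^ α * Real.exp (-(c * ‖y‖)))
      = ∫ y in {y : E3 | (inner ℝ d y : ℝ) ≤ 0}, ‖y‖ ^ α * Real.exp (-(c * ‖y‖)) :=
    setIntegral_congr_set haeeq
  have hcompl : ({y : E3 | (inner ℝ d y : ℝ) ≤ 0})ᶜ = {y : E3 | (0:ℝ) < inner ℝ d y} := by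
    ext y; simp [not_le]
  have h2 := integral_add_compl hHmeas hgint
  rw [hcompl, hneg, hsub, aux_g_integral hc hα0] at h2
  have hcpos : (0:ℝ) < c ^ (3 + α) := Real.rpow_pos_of_pos hc _
  rw [eq_div_iff hcpos.ne']
  rw [eq_div_iff hcpos.ne'] at h2
  linarith

lemma euclid_main (K : Set E3) (hKmeas : MeasurableSet K)
    (hKcone : ∀ x ∈ K, ∀ l : ℝ, 0 < l → l • x ∈ K)
    (d : E3) (hd : ‖d‖ = 1) (c : ℝ) (hc : 0 < c)
    (hdK : ∀ x ∈ K, x ≠ 0 → (inner ℝ d x : ℝ) ≤ -c * ‖x‖)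
    (α : ℝ) (hα0 : 0 < α) (hα1 : α < 1) (τ : ℝ) (hτ : 0 < τ) :
    IntegrableOn (fun x : E3 => ‖x‖ ^ α * Real.exp (τ * inner ℝ d x)) K volume ∧
    IntegrableOn (fun y : E3 => ‖y‖ ^ α * Real.exp (inner ℝ d y)) K volume ∧
    (∫ x in K, ‖x‖ ^ α * Real.exp (τ * inner ℝ d x))
      ≤ τ ^ (-(3 + α)) * ∫ y in K, ‖y‖ ^ α * Real.exp (inner ℝ d y) ∧
    (∫ y in K, ‖y‖ ^ α * Real.exp (inner ℝ d y))
      ≤ 2 * Real.pi * Real.Gamma (3 + α) / c ^ (3 + α) := by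
  have hd0 : d ≠ 0 := by
    intro h
    rw [h, norm_zero] at hd
    norm_num at hd
  -- integrability for any positive σ
  have hint : ∀ σ : ℝ, 0 < σ →
      IntegrableOn (fun x : E3 => ‖x‖ ^ α * Real.exp (σ * inner ℝ d x)) K volume := by
    intro σ hσ
    refine Integrable.mono' ((aux_g_integrable (mul_pos hσ hc) hα0 hα1).integrableOn)
      ?_ ?_
    · exact ((continuous_norm.rpow_const fun _ => Or.inr hα0.le).mul
        (Real.continuous_exp.comp
          (continuous_const.mul (Continuous.inner continuous_const continuous_id)))).aestronglyMeasurable.restrict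
    · filter_upwards [ae_restrict_mem hKmeas] with x hx
      rw [Real.norm_eq_abs, abs_of_nonneg (by positivity)]
      refine mul_le_mul_of_nonneg_left ?_ (Real.rpow_nonneg (norm_nonneg x) α)
      refine Real.exp_le_exp.2 ?_
      rcases eq_or_ne x 0 with rfl | hx0
      · simp
      · have h := hdK x hx hx0
        nlinarith [norm_nonneg x]
  have hint1 : IntegrableOn (fun y : E3 => ‖y‖ ^ α * Real.exp (inner ℝ d y)) K volume := by
    have := hint 1 one_pos
    simpa using this
  refine ⟨hint τ hτ, hint1, ?_, ?_⟩
  · -- scaling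
    have hKsmul : τ • K = K := by
      ext y
      constructor
      · rintro ⟨x, hx, rfl⟩
        exact hKcone x hx τ hτ
      · intro hy
        exact ⟨τ⁻¹ • y, hKcone y hy τ⁻¹ (inv_pos.2 hτ),
          by show τ • τ⁻¹ • y = y; rw [smul_smul, mul_inv_cancel₀ hτ.ne', one_smul]⟩
    have h := Measure.setIntegral_comp_smul_of_pos volume
      (fun y : E3 => ‖y‖ ^ α * Real.exp (inner ℝ d y)) K hτ
    rw [hKsmul] at h
    have hfe : ∀ x : E3, ‖τ • x‖ ^ α * Real.exp (inner ℝ d (τ • x))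
        = τ ^ α * (‖x‖ ^ α * Real.exp (τ * inner ℝ d x)) := by
      intro x
      rw [norm_smul, Real.norm_eq_abs, abs_of_pos hτ,
        Real.mul_rpow hτ.le (norm_nonneg x), real_inner_smul_right]
      ring
    simp only [hfe, finrank_euclideanSpace_fin, smul_eq_mul] at h
    rw [integral_const_mul] at h
    have hτα : (0:ℝ) < τ ^ α := Real.rpow_pos_of_pos hτ α
    have hτ3 : (0:ℝ) < τ ^ (3:ℕ) := by positivity
    have hτpow : τ ^ (-(3 + α)) = (τ ^ (3:ℕ))⁻¹ * (τ ^ α)⁻¹ := by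
      rw [neg_add, Real.rpow_add hτ, Real.rpow_neg hτ.le, Real.rpow_neg hτ.le,
        show ((3:ℝ)) = ((3:ℕ):ℝ) by norm_num, Real.rpow_natCast]
    rw [hτpow]
    refine le_of_eq ?_
    field_simp at h ⊢
    linear_combination h
  · -- bound by half-space integral
    have hKH : K ⊆ {y : E3 | (inner ℝ d y : ℝ) ≤ 0} := by
      intro x hx
      rcases eq_or_ne x 0 with rfl | hx0
      · simp
      · have h := hdK x hx hx0
        have : -c * ‖x‖ ≤ 0 := by nlinarith [norm_nonneg x]
        exact le_trans h this
    have hstep1 : (∫ y in K, ‖y‖ ^ α * Real.exp (inner ℝ d y))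
        ≤ ∫ y in K, ‖y‖ ^ α * Real.exp (-(c * ‖y‖)) := by
      refine setIntegral_mono_on hint1
        ((aux_g_integrable hc hα0 hα1).integrableOn) hKmeas fun x hx => ?_
      refine mul_le_mul_of_nonneg_left ?_ (Real.rpow_nonneg (norm_nonneg x) α)
      refine Real.exp_le_exp.2 ?_
      rcases eq_or_ne x 0 with rfl | hx0
      · simp
      · have h := hdK x hx hx0
        nlinarith
    have hstep2 : (∫ y in K, ‖y‖ ^ α * Real.exp (-(c * ‖y‖)))
        ≤ ∫ y in {y : E3 | (inner ℝ d y : ℝ) ≤ 0}, ‖y‖ ^ α * Real.exp (-(c * ‖y‖)) := by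
      refine setIntegral_mono_set ((aux_g_integrable hc hα0 hα1).integrableOn)
        (ae_of_all _ fun x => by positivity) (HasSubset.Subset.eventuallyLE hKH)
    calc (∫ y in K, ‖y‖ ^ α * Real.exp (inner ℝ d y))
        ≤ ∫ y in {y : E3 | (inner ℝ d y : ℝ) ≤ 0}, ‖y‖ ^ α * Real.exp (-(c * ‖y‖)) :=
          hstep1.trans hstep2
      _ = 2 * Real.pi * Real.Gamma (3 + α) / c ^ (3 + α) :=
          aux_halfspace hc hα0 hα1 d hd0

/-- Euclidean (bilinear) dot product on `ℝ³`. -/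
def dotR (x y : Fin 3 → ℝ) : ℝ := ∑ i, x i * y i

/-- ℂ-bilinear (non-conjugated) dot product on `ℂ³`. -/
def dotC (x y : Fin 3 → ℂ) : ℂ := ∑ i, x i * y i

/-- Euclidean norm on `ℝ³` (the Pi-type sup norm is not the Euclidean one). -/
def nrm (x : Fin 3 → ℝ) : ℝ := Real.sqrt (∑ i, (x i) ^ 2)

/-- Inclusion `ℝ³ ↪ ℂ³`. -/
def toC (x : Fin 3 → ℝ) : Fin 3 → ℂ := fun i => (x i : ℂ)

/-- decay estimate `∫_𝒦 |x|^α e^{τ d·x} dx ≤ τ^{-(3+α)} ∫_𝒦 |y|^α e^{d·y} dy`,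
with the latter bounded by `2π Γ(3+α)/c^{3+α}`; in particular both integrals are finite. -/
theorem cone_weighted_exp_decay
    (K : Set (Fin 3 → ℝ)) (hKmeas : MeasurableSet K)
    (hKcone : ∀ x ∈ K, ∀ l : ℝ, 0 < l → l • x ∈ K)
    (d : Fin 3 → ℝ) (hd : nrm d = 1)
    (c : ℝ) (hc : 0 < c)
    (hdK : ∀ x ∈ K, x ≠ 0 → dotR d x ≤ -c * nrm x)
    (α : ℝ) (hα0 : 0 < α) (hα1 : α < 1)
    (τ : ℝ) (hτ : 0 < τ) :
    IntegrableOn (fun x => nrm x ^ α * Real.exp (τ * dotR d x)) K volume ∧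
    IntegrableOn (fun y => nrm y ^ α * Real.exp (dotR d y)) K volume ∧
    (∫ x in K, nrm x ^ α * Real.exp (τ * dotR d x))
      ≤ τ ^ (-(3 + α)) * ∫ y in K, nrm y ^ α * Real.exp (dotR d y) ∧
    (∫ y in K, nrm y ^ α * Real.exp (dotR d y))
      ≤ 2 * Real.pi * Real.Gamma (3 + α) / c ^ (3 + α) := by
  set e : E3 ≃ᵐ (Fin 3 → ℝ) := (MeasurableEquiv.toLp 2 (Fin 3 → ℝ)).symm with he
  have hmp : MeasurePreserving e volume volume :=
    EuclideanSpace.volume_preserving_symm_measurableEquiv_toLp (Fin 3)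
  have hemb : MeasurableEmbedding e := e.measurableEmbedding
  set dE : E3 := (WithLp.equiv 2 (Fin 3 → ℝ)).symm d with hdE
  have hed : e dE = d := rfl
  have hnrm : ∀ x : E3, nrm (e x) = ‖x‖ := by
    intro x
    rw [EuclideanSpace.norm_eq]
    simp [nrm, Real.norm_eq_abs, sq_abs]
    rfl
  have hdot : ∀ x : E3, dotR d (e x) = (inner ℝ dE x : ℝ) := by
    intro x
    rw [PiLp.inner_apply]
    simp [dotR, RCLike.inner_apply]
    exact Finset.sum_congr rfl fun i _ => mul_comm _ _
  have hK'meas : MeasurableSet (e ⁻¹' K) := hKmeas.preimage e.measurable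
  have hK'cone : ∀ x ∈ e ⁻¹' K, ∀ l : ℝ, 0 < l → l • x ∈ e ⁻¹' K := by
    intro x hx l hl
    have : e (l • x) = l • (e x) := rfl
    show e (l • x) ∈ K
    rw [this]
    exact hKcone (e x) hx l hl
  have hdE1 : ‖dE‖ = 1 := by rw [← hnrm dE, hed]; exact hd
  have hdK' : ∀ x ∈ e ⁻¹' K, x ≠ 0 → (inner ℝ dE x : ℝ) ≤ -c * ‖x‖ := by
    intro x hx hx0
    have hex0 : e x ≠ 0 := fun h =>
      hx0 (e.injective (h.trans (rfl : e (0:E3) = (0 : Fin 3 → ℝ)).symm))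
    have := hdK (e x) hx hex0
    rwa [hdot, hnrm] at this
  obtain ⟨h1, h2, h3, h4⟩ := euclid_main (e ⁻¹' K) hK'meas hK'cone dE hdE1 c hc hdK' α hα0 hα1 τ hτ
  have hfunτ : (fun x : E3 => nrm (e x) ^ α * Real.exp (τ * dotR d (e x)))
      = fun x : E3 => ‖x‖ ^ α * Real.exp (τ * inner ℝ dE x) := by
    funext x; rw [hnrm, hdot]
  have hfun1 : (fun x : E3 => nrm (e x) ^ α * Real.exp (dotR d (e x)))
      = fun x : E3 => ‖x‖ ^ α * Real.exp (inner ℝ dE x) := by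
    funext x; rw [hnrm, hdot]
  have hiτ : IntegrableOn (fun x => nrm x ^ α * Real.exp (τ * dotR d x)) K volume := by
    rw [← hmp.integrableOn_comp_preimage hemb]
    show IntegrableOn (fun x : E3 => nrm (e x) ^ α * Real.exp (τ * dotR d (e x))) _ _
    rw [hfunτ]
    exact h1
  have hi1 : IntegrableOn (fun y => nrm y ^ α * Real.exp (dotR d y)) K volume := by
    rw [← hmp.integrableOn_comp_preimage hemb]
    show IntegrableOn (fun x : E3 => nrm (e x) ^ α * Real.exp (dotR d (e x))) _ _
    rw [hfun1]
    exact h2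
  have heqτ : (∫ x in K, nrm x ^ α * Real.exp (τ * dotR d x))
      = ∫ x in e ⁻¹' K, ‖x‖ ^ α * Real.exp (τ * inner ℝ dE x) := by
    rw [← hmp.setIntegral_preimage_emb hemb (fun x => nrm x ^ α * Real.exp (τ * dotR d x)) K]
    rw [← hfunτ]
  have heq1 : (∫ y in K, nrm y ^ α * Real.exp (dotR d y))
      = ∫ x in e ⁻¹' K, ‖x‖ ^ α * Real.exp (inner ℝ dE x) := by
    rw [← hmp.setIntegral_preimage_emb hemb (fun y => nrm y ^ α * Real.exp (dotR d y)) K]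
    rw [← hfun1]
  exact ⟨hiτ, hi1, by rw [heqτ, heq1]; exact h3, by rw [heq1]; exact h4⟩
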